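/- Let S1, S2 ⊆ Ω = {0,...,D-1}, |S1| = f1, |S2| = f2, |S1∩S2| = a ≥ 1, and let π be a uniformly random permutation of Ω. Then for 0 ≤ i ≤ D - f1 - f2 + a, Pr(min π(S1) = i and min π(S2) = i) = (a/D) · Π_{t=0}^{i-1} (D - f1 - f2 + a - t)/(D - 1 - t). -/

import Mathlib

open Finset Nat

private lemma count_agree {α : Type*} [Fintype α] [DecidableEq α] (A : Finset α)
    (g : {x // x ∈ A} → α) (hg : Function.Injective g) :
    (Finset.univ.filter (fun π : Equiv.Perm α => ∀ y : {x // x ∈ A}, π y.1 = g y)).card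
      = (Fintype.card α - A.card)! := by
  classical
  set B : Finset α := Finset.univ.image g with hB
  have hBcard : B.card = A.card := by
    rw [hB, Finset.card_image_of_injective _ hg, Finset.card_univ, Fintype.card_coe]
  have hbij : Function.Bijective
      (fun y : {x // x ∈ A} => (⟨g y, by simp [hB]⟩ : {x // x ∈ B})) := by
    rw [Fintype.bijective_iff_injective_and_card]
    constructor
    · intro y z h
      exact hg (congrArg Subtype.val h)
    · simp [Fintype.card_coe, hBcard]
  set e : {x // x ∈ A} ≃ {x // x ∈ B} := Equiv.ofBijective _ hbij with he
  set π₀ : Equiv.Perm α := e.extendSubtype with hπ₀def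
  have hπ₀ : ∀ y : {x // x ∈ A}, π₀ y.1 = g y := by
    intro y
    rw [hπ₀def, Equiv.extendSubtype_apply_of_mem e y.1 y.2]
    rfl
  have step1 : (Finset.univ.filter
        (fun π : Equiv.Perm α => ∀ y : {x // x ∈ A}, π y.1 = g y)).card
      = (Finset.univ.filter
        (fun π : Equiv.Perm α => ∀ y : {x // x ∈ A}, π y.1 = y.1)).card := by
    apply Finset.card_bij' (fun π _ => π₀⁻¹ * π) (fun π _ => π₀ * π)
    · intro π hπ
      simp only [mem_filter, mem_univ, true_and] at hπ ⊢
      intro y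
      rw [Equiv.Perm.mul_apply, hπ y, ← hπ₀ y, Equiv.Perm.inv_def, Equiv.symm_apply_apply]
    · intro π hπ
      simp only [mem_filter, mem_univ, true_and] at hπ ⊢
      intro y
      rw [Equiv.Perm.mul_apply, hπ y, hπ₀ y]
    · intro π _; exact mul_inv_cancel_left _ _
    · intro π _; exact inv_mul_cancel_left _ _
  rw [step1, ← Fintype.card_subtype]
  have e2 : {π : Equiv.Perm α // ∀ y : {x // x ∈ A}, π y.1 = y.1}
      ≃ Equiv.Perm {x // x ∉ A} := by
    refine (Equiv.subtypeEquivRight ?_).trans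
      (Equiv.Perm.subtypeEquivSubtypePerm (fun x => x ∉ A)).symm
    intro π
    constructor
    · intro h x hx
      exact h ⟨x, not_not.mp hx⟩
    · intro h y
      exact h y.1 (not_not.mpr y.2)
  rw [Fintype.card_congr e2, Fintype.card_perm, Fintype.card_subtype_compl, Fintype.card_coe]

private lemma count_restrict {α : Type*} [Fintype α] [DecidableEq α] (A : Finset α)
    (Q : ({x // x ∈ A} → α) → Prop) [DecidablePred Q] :
    (Finset.univ.filter (fun π : Equiv.Perm α => Q (fun y => π y.1))).card
      = (Finset.univ.filter
          (fun g : {x // x ∈ A} → α => Function.Injective g ∧ Q g)).card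
          * (Fintype.card α - A.card)! := by
  classical
  have hmem : ∀ π ∈ Finset.univ.filter (fun π : Equiv.Perm α => Q (fun y => π y.1)),
      (fun y : {x // x ∈ A} => π y.1)
        ∈ Finset.univ.filter (fun g : {x // x ∈ A} → α => Function.Injective g ∧ Q g) := by
    intro π hπ
    simp only [mem_filter, mem_univ, true_and] at hπ ⊢
    exact ⟨fun y z h => Subtype.ext (π.injective h), hπ⟩
  rw [Finset.card_eq_sum_card_fiberwise hmem]
  have heach : ∀ g ∈ Finset.univ.filter
      (fun g : {x // x ∈ A} → α => Function.Injective g ∧ Q g),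
      ((Finset.univ.filter (fun π : Equiv.Perm α => Q (fun y => π y.1))).filter
        (fun π => (fun y : {x // x ∈ A} => π y.1) = g)).card
      = (Fintype.card α - A.card)! := by
    intro g hg
    simp only [mem_filter, mem_univ, true_and] at hg
    have hset : ((Finset.univ.filter (fun π : Equiv.Perm α => Q (fun y => π y.1))).filter
        (fun π => (fun y : {x // x ∈ A} => π y.1) = g))
        = Finset.univ.filter (fun π : Equiv.Perm α => ∀ y : {x // x ∈ A}, π y.1 = g y) := by
      ext π
      simp only [Finset.mem_filter, Finset.mem_univ, true_and, funext_iff]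
      constructor
      · rintro ⟨-, h⟩
        exact h
      · intro h
        refine ⟨?_, h⟩
        have : (fun y : {x // x ∈ A} => π y.1) = g := funext h
        rw [this]
        exact hg.2
    rw [hset, count_agree A g hg.1]
  rw [Finset.sum_congr rfl heach, Finset.sum_const, smul_eq_mul]

private lemma count_inj {D : ℕ} (T : Finset (Fin D)) (x : Fin D) (hx : x ∈ T) (i : Fin D) :
    (Finset.univ.filter (fun g : {y // y ∈ T} → Fin D =>
        Function.Injective g ∧ (g ⟨x, hx⟩ = i ∧ ∀ y : {y // y ∈ T}, y.1 ≠ x → i < g y))).card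
      = (D - 1 - (i : ℕ)).descFactorial (T.card - 1) := by
  classical
  rw [← Fintype.card_subtype]
  have e : {g : {y // y ∈ T} → Fin D //
      Function.Injective g ∧ (g ⟨x, hx⟩ = i ∧ ∀ y : {y // y ∈ T}, y.1 ≠ x → i < g y)}
      ≃ ({y // y ∈ T.erase x} ↪ {j // j ∈ Finset.Ioi i}) := by
    refine
      { toFun := fun g =>
          { toFun := fun y => ⟨g.1 ⟨y.1, (Finset.mem_erase.mp y.2).2⟩,
              Finset.mem_Ioi.mpr (g.2.2.2 ⟨y.1, (Finset.mem_erase.mp y.2).2⟩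
                (Finset.mem_erase.mp y.2).1)⟩
            inj' := by
              intro y z h
              have h1 : g.1 ⟨y.1, (Finset.mem_erase.mp y.2).2⟩
                  = g.1 ⟨z.1, (Finset.mem_erase.mp z.2).2⟩ := congrArg Subtype.val h
              have h2 := g.2.1 h1
              injection h2 with h3
              exact Subtype.ext h3 }
        invFun := fun h =>
          ⟨fun y => if hy : y.1 = x then i
              else (h ⟨y.1, Finset.mem_erase.mpr ⟨hy, y.2⟩⟩).1, ?_, ?_, ?_⟩
        left_inv := ?_
        right_inv := ?_ }
    · -- injectivity of invFun's function
      intro y z hyz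
      by_cases hy : y.1 = x <;> by_cases hz : z.1 = x
      · exact Subtype.ext (hy.trans hz.symm)
      · simp only [dif_pos hy, dif_neg hz] at hyz
        have := (h ⟨z.1, Finset.mem_erase.mpr ⟨hz, z.2⟩⟩).2
        rw [Finset.mem_Ioi, ← hyz] at this
        exact absurd this (lt_irrefl _)
      · simp only [dif_neg hy, dif_pos hz] at hyz
        have := (h ⟨y.1, Finset.mem_erase.mpr ⟨hy, y.2⟩⟩).2
        rw [Finset.mem_Ioi, hyz] at this
        exact absurd this (lt_irrefl _)
      · simp only [dif_neg hy, dif_neg hz] at hyz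
        have h2 := h.injective (Subtype.ext hyz)
        injection h2 with h3
        exact Subtype.ext h3
    · -- value at ⟨x, hx⟩
      exact dif_pos rfl
    · -- values above i elsewhere
      intro y hy
      simp only [dif_neg hy]
      exact Finset.mem_Ioi.mp (h ⟨y.1, Finset.mem_erase.mpr ⟨hy, y.2⟩⟩).2
    · -- left_inv
      intro g
      apply Subtype.ext
      funext y
      by_cases hy : y.1 = x
      · simp only [dif_pos hy]
        have : y = ⟨x, hx⟩ := Subtype.ext hy
        rw [this, g.2.2.1]
      · simp only [dif_neg hy]
        rfl
    · -- right_inv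
      intro h
      apply DFunLike.ext
      intro y
      apply Subtype.ext
      simp only [Function.Embedding.coeFn_mk]
      rw [dif_neg (Finset.mem_erase.mp y.2).1]
  rw [Fintype.card_congr e, Fintype.card_embedding_eq, Fintype.card_coe, Fintype.card_coe,
    Finset.card_erase_of_mem hx, Fin.card_Ioi]

private lemma nat_identity (D u a i : ℕ) (hu : 1 ≤ u) (hui : i + u ≤ D) :
    a * ((D - 1 - i).descFactorial (u - 1) * (D - u)!) * (D * (D - 1).descFactorial i)
      = a * (D - u).descFactorial i * D ! := by
  apply Nat.eq_of_mul_eq_mul_left (Nat.factorial_pos (D - u - i))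
  have h1 : (D - u - i)! * (D - 1 - i).descFactorial (u - 1) = (D - 1 - i)! := by
    have h := Nat.factorial_mul_descFactorial (n := D - 1 - i) (k := u - 1) (by omega)
    rwa [show D - 1 - i - (u - 1) = D - u - i by omega] at h
  have h2 : (D - 1 - i)! * (D - 1).descFactorial i = (D - 1)! := by
    have h := Nat.factorial_mul_descFactorial (n := D - 1) (k := i) (by omega)
    rwa [show D - 1 - i = D - 1 - i from rfl] at h
  have h3 : (D - u - i)! * (D - u).descFactorial i = (D - u)! := by
    have h := Nat.factorial_mul_descFactorial (n := D - u) (k := i) (by omega)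
    rwa [show D - u - i = D - u - i from rfl] at h
  have h4 : D * (D - 1)! = D ! := Nat.mul_factorial_pred (by omega)
  calc (D - u - i)! * (a * ((D - 1 - i).descFactorial (u - 1) * (D - u)!)
        * (D * (D - 1).descFactorial i))
      = a * (D - u)! * D * (((D - u - i)! * (D - 1 - i).descFactorial (u - 1))
          * (D - 1).descFactorial i) := by ring
    _ = a * (D - u)! * D * ((D - 1 - i)! * (D - 1).descFactorial i) := by rw [h1]
    _ = a * (D - u)! * (D * (D - 1)!) := by rw [h2]; ring
    _ = a * (D - u)! * D ! := by rw [h4]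
    _ = a * D ! * ((D - u - i)! * (D - u).descFactorial i) := by rw [h3]; ring
    _ = (D - u - i)! * (a * (D - u).descFactorial i * D !) := by ring

theorem exact_joint_minima_prob (D : ℕ) (S1 S2 : Finset (Fin D)) (f1 f2 a : ℕ)
    (hf1 : S1.card = f1) (hf2 : S2.card = f2) (ha : (S1 ∩ S2).card = a)
    (ha1 : 1 ≤ a) (i : Fin D) (hi : (i : ℕ) + f1 + f2 ≤ D + a) :
    ((Finset.univ.filter
        (fun π : Equiv.Perm (Fin D) =>
          (S1.image π).min = (i : WithTop (Fin D)) ∧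
          (S2.image π).min = (i : WithTop (Fin D)))).card : ℝ)
      / (Fintype.card (Equiv.Perm (Fin D)) : ℝ)
      = ((a : ℝ) / (D : ℝ)) *
          ∏ t ∈ Finset.range (i : ℕ),
            ((D : ℝ) - (f1 : ℝ) - (f2 : ℝ) + (a : ℝ) - (t : ℝ))
              / ((D : ℝ) - 1 - (t : ℝ)) := by
  classical
  have hD : 0 < D := i.pos
  set T : Finset (Fin D) := S1 ∪ S2 with hT
  set u : ℕ := T.card with hu
  have hfa : u + a = f1 + f2 := by
    rw [hu, hT, ← ha, ← hf1, ← hf2]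
    exact Finset.card_union_add_card_inter S1 S2
  have hau : a ≤ u := by
    rw [hu, hT, ← ha]
    exact Finset.card_le_card (Finset.inter_subset_union)
  have hu1 : 1 ≤ u := le_trans ha1 hau
  have huD : (i : ℕ) + u ≤ D := by omega
  have hiD : (i : ℕ) < D := i.isLt
  -- characterization of the min condition
  have hmin : ∀ (S : Finset (Fin D)) (π : Equiv.Perm (Fin D)),
      (S.image π).min = (i : WithTop (Fin D)) ↔
        (π.symm i ∈ S ∧ ∀ y ∈ S, i ≤ π y) := by
    intro S π
    constructor
    · intro h
      have hmem : (i : Fin D) ∈ S.image π := Finset.mem_of_min h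
      obtain ⟨s, hs, hsi⟩ := Finset.mem_image.mp hmem
      constructor
      · rw [← hsi, Equiv.symm_apply_apply]; exact hs
      · intro y hy
        have h2 := Finset.min_le (Finset.mem_image_of_mem π hy)
        rw [h] at h2
        exact_mod_cast h2
    · rintro ⟨h1, h2⟩
      apply le_antisymm
      · refine Finset.min_le ?_
        refine Finset.mem_image.mpr ⟨π.symm i, h1, ?_⟩
        exact π.apply_symm_apply i
      · apply Finset.le_min
        intro b hb
        obtain ⟨y, hy, rfl⟩ := Finset.mem_image.mp hb
        exact_mod_cast h2 y hy
  -- rewrite the counted set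
  have hset : (Finset.univ.filter
        (fun π : Equiv.Perm (Fin D) =>
          (S1.image π).min = (i : WithTop (Fin D)) ∧
          (S2.image π).min = (i : WithTop (Fin D))))
      = Finset.univ.filter (fun π : Equiv.Perm (Fin D) =>
          π.symm i ∈ S1 ∩ S2 ∧ ∀ y ∈ T, (i : Fin D) ≤ π y) := by
    apply Finset.filter_congr
    intro π _
    rw [hmin S1 π, hmin S2 π]
    constructor
    · rintro ⟨⟨hm1, hb1⟩, ⟨hm2, hb2⟩⟩
      refine ⟨Finset.mem_inter.mpr ⟨hm1, hm2⟩, ?_⟩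
      intro y hy
      rcases Finset.mem_union.mp hy with h | h
      exacts [hb1 y h, hb2 y h]
    · rintro ⟨hmem, hall⟩
      have h1 := Finset.mem_inter.mp hmem
      exact ⟨⟨h1.1, fun y hy => hall y (Finset.mem_union_left _ hy)⟩,
             ⟨h1.2, fun y hy => hall y (Finset.mem_union_right _ hy)⟩⟩
  -- maps to fibers
  have hmaps : ∀ π ∈ Finset.univ.filter (fun π : Equiv.Perm (Fin D) =>
      π.symm i ∈ S1 ∩ S2 ∧ ∀ y ∈ T, (i : Fin D) ≤ π y),
      π.symm i ∈ S1 ∩ S2 := by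
    intro π hπ
    exact ((Finset.mem_filter.mp hπ).2).1
  -- each fiber has the same cardinality
  have hfiber : ∀ x ∈ S1 ∩ S2,
      ((Finset.univ.filter (fun π : Equiv.Perm (Fin D) =>
          π.symm i ∈ S1 ∩ S2 ∧ ∀ y ∈ T, (i : Fin D) ≤ π y)).filter
        (fun π => π.symm i = x)).card
      = (D - 1 - (i : ℕ)).descFactorial (u - 1) * (D - u)! := by
    intro x hxE
    have hxT : x ∈ T := Finset.mem_union_left _ (Finset.mem_inter.mp hxE).1
    have key : ((Finset.univ.filter (fun π : Equiv.Perm (Fin D) =>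
          π.symm i ∈ S1 ∩ S2 ∧ ∀ y ∈ T, (i : Fin D) ≤ π y)).filter
        (fun π => π.symm i = x))
        = Finset.univ.filter (fun π : Equiv.Perm (Fin D) =>
            (fun g : {y // y ∈ T} → Fin D =>
              g ⟨x, hxT⟩ = i ∧ ∀ y : {y // y ∈ T}, y.1 ≠ x → i < g y)
            (fun y => π y.1)) := by
      rw [Finset.filter_filter]
      apply Finset.filter_congr
      intro π _
      simp only
      constructor
      · rintro ⟨⟨hmem, hall⟩, hsym⟩
        have hπx : π x = i := by rw [← hsym]; exact π.apply_symm_apply i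
        refine ⟨hπx, ?_⟩
        intro y hy
        refine lt_of_le_of_ne (hall y.1 y.2) ?_
        intro hEq
        apply hy
        have h3 : π.symm i = y.1 := by rw [hEq]; exact π.symm_apply_apply y.1
        rw [← h3, hsym]
      · rintro ⟨hπx, hlt⟩
        have hsym : π.symm i = x := by rw [← hπx]; exact π.symm_apply_apply x
        refine ⟨⟨by rw [hsym]; exact hxE, ?_⟩, hsym⟩
        intro y hy
        by_cases hyx : y = x
        · rw [hyx, hπx]
        · exact le_of_lt (hlt ⟨y, hy⟩ hyx)
    rw [key, count_restrict T (fun g : {y // y ∈ T} → Fin D =>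
        g ⟨x, hxT⟩ = i ∧ ∀ y : {y // y ∈ T}, y.1 ≠ x → i < g y),
      count_inj T x hxT i, Fintype.card_fin]
  -- the count
  have hN : (Finset.univ.filter
        (fun π : Equiv.Perm (Fin D) =>
          (S1.image π).min = (i : WithTop (Fin D)) ∧
          (S2.image π).min = (i : WithTop (Fin D)))).card
      = a * ((D - 1 - (i : ℕ)).descFactorial (u - 1) * (D - u)!) := by
    rw [hset, Finset.card_eq_sum_card_fiberwise hmaps,
      Finset.sum_congr rfl hfiber, Finset.sum_const, smul_eq_mul, ha]
  rw [hN, Fintype.card_perm, Fintype.card_fin]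
  -- product computation
  have hprod : (∏ t ∈ Finset.range (i : ℕ),
        ((D : ℝ) - (f1 : ℝ) - (f2 : ℝ) + (a : ℝ) - (t : ℝ))
          / ((D : ℝ) - 1 - (t : ℝ)))
      = ((D - u).descFactorial (i : ℕ) : ℝ) / ((D - 1).descFactorial (i : ℕ) : ℝ) := by
    rw [Finset.prod_div_distrib]
    congr 1
    · rw [Nat.descFactorial_eq_prod_range, Nat.cast_prod]
      apply Finset.prod_congr rfl
      intro t ht
      have ht' : t < (i : ℕ) := Finset.mem_range.mp ht
      have hcast : (u : ℝ) + a = f1 + f2 := by exact_mod_cast hfa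
      rw [Nat.cast_sub (by omega : t ≤ D - u), Nat.cast_sub (by omega : u ≤ D)]
      linarith
    · rw [Nat.descFactorial_eq_prod_range, Nat.cast_prod]
      apply Finset.prod_congr rfl
      intro t ht
      have ht' : t < (i : ℕ) := Finset.mem_range.mp ht
      rw [Nat.cast_sub (by omega : t ≤ D - 1), Nat.cast_sub (by omega : 1 ≤ D)]
      norm_num
  rw [hprod]
  have hDne : (D : ℝ) ≠ 0 := by exact_mod_cast Nat.cast_ne_zero.mpr (by omega : D ≠ 0)
  have hdB : ((D - 1).descFactorial (i : ℕ) : ℝ) ≠ 0 := by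
    have h0 : (D - 1).descFactorial (i : ℕ) ≠ 0 := fun hc => by
      have := Nat.descFactorial_eq_zero_iff_lt.mp hc
      omega
    exact_mod_cast h0
  have hfac : ((D)! : ℝ) ≠ 0 := by exact_mod_cast Nat.factorial_ne_zero D
  have hid := nat_identity D u a (i : ℕ) hu1 huD
  have hidR := congrArg (fun n : ℕ => (n : ℝ)) hid
  push_cast at hidR
  field_simp
  push_cast
  linear_combination hidR
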